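/- Let F : 𝒜 → ℬ be a triangle functor between triangulated categories, let Ker F be the full triangulated subcategory of objects X with F(X) ≅ 0, let V_F : 𝒜 → 𝒜/Ker F be the Verdier quotient functor, and let F̃ : 𝒜/Ker F → ℬ be the unique triangle functor with F = F̃ ∘ V_F. Then the following are equivalent: (1) F is objective; (2) F satisfies condition (WSM); (3) F̃ is faithful. -/

import Mathlib

universe v u v' u' v'' u''

open CategoryTheory Limits Pretriangulated

section CatPreamble

variable {𝒜 : Type u} [Category.{v} 𝒜] {ℬ : Type u'} [Category.{v'} ℬ]

/-- An additive functor is objective if every morphism killed by `F` factors through an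
object killed by `F`. -/
def ObjectiveFunctor [Limits.HasZeroMorphisms ℬ] (F : 𝒜 ⥤ ℬ) : Prop :=
  ∀ ⦃X Y : 𝒜⦄ (f : X ⟶ Y), F.map f = 0 →
    ∃ (K : 𝒜) (g : X ⟶ K) (h : K ⟶ Y), Limits.IsZero (F.obj K) ∧ g ≫ h = f

/-- Condition (WSM). -/
def CondWSM (F : 𝒜 ⥤ ℬ) : Prop :=
  ∀ ⦃X Y : 𝒜⦄ (u : X ⟶ Y), IsSplitMono (F.map u) →
    ∃ (X' : 𝒜) (u' : Y ⟶ X'), IsIso (F.map (u ≫ u'))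

/-- Condition (I). -/
def CondI (F : 𝒜 ⥤ ℬ) : Prop :=
  ∀ ⦃X Y : 𝒜⦄ (u : X ⟶ Y) (_ : IsIso (F.map u)),
    ∃ u' : Y ⟶ X, F.map u' = CategoryTheory.inv (F.map u)

/-- Condition (SM). -/
def CondSM (F : 𝒜 ⥤ ℬ) : Prop :=
  ∀ ⦃X Y : 𝒜⦄ (u : X ⟶ Y), IsSplitMono (F.map u) →
    ∃ u' : Y ⟶ X, F.map (u ≫ u') = 𝟙 (F.obj X)

variable (𝒜) in
/-- Iterated composition of an endomorphism. -/
def compPow {X : 𝒜} (f : X ⟶ X) : ℕ → (X ⟶ X)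
  | 0 => 𝟙 X
  | n + 1 => f ≫ compPow f n

variable (𝒜) in
/-- A Fitting category: every endomorphism decomposes as an automorphism plus a
nilpotent endomorphism along a direct sum decomposition of the object. -/
def IsFittingCategory [Preadditive 𝒜] : Prop :=
  ∀ (X : 𝒜) (a : X ⟶ X),
    ∃ (X' X'' : 𝒜) (i' : X' ⟶ X) (p' : X ⟶ X') (i'' : X'' ⟶ X) (p'' : X ⟶ X''),
      i' ≫ p' = 𝟙 X' ∧ i'' ≫ p'' = 𝟙 X'' ∧ i' ≫ p'' = 0 ∧ i'' ≫ p' = 0 ∧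
      p' ≫ i' + p'' ≫ i'' = 𝟙 X ∧
      i' ≫ a ≫ p'' = 0 ∧ i'' ≫ a ≫ p' = 0 ∧
      IsIso (i' ≫ a ≫ p') ∧ ∃ n : ℕ, compPow 𝒜 (i'' ≫ a ≫ p'') (n + 1) = 0

section Triangulated

variable [HasZeroObject 𝒜] [Preadditive 𝒜] [HasShift 𝒜 ℤ]
  [∀ n : ℤ, (shiftFunctor 𝒜 n).Additive] [Pretriangulated 𝒜]
  [HasZeroObject ℬ] [Preadditive ℬ] [HasShift ℬ ℤ]
  [∀ n : ℤ, (shiftFunctor ℬ n).Additive] [Pretriangulated ℬ]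

/-- The class of morphisms of `𝒜` whose cone is killed by `F`; the Verdier quotient of
`𝒜` by `Ker F` is the localization of `𝒜` at this class. -/
def kerW (F : 𝒜 ⥤ ℬ) : MorphismProperty 𝒜 := fun X Y f =>
  ∃ (Z : 𝒜) (g : Y ⟶ Z) (h : Z ⟶ X⟦(1 : ℤ)⟧),
    (Triangle.mk f g h ∈ distTriang 𝒜) ∧ IsZero (F.obj Z)

end Triangulated

end CatPreamble

section Helpers

variable {𝒜 : Type u} [Category.{v} 𝒜] [HasZeroObject 𝒜] [Preadditive 𝒜] [HasShift 𝒜 ℤ]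
  [∀ n : ℤ, (shiftFunctor 𝒜 n).Additive] [Pretriangulated 𝒜]
  {ℬ : Type u'} [Category.{v'} ℬ] [HasZeroObject ℬ] [Preadditive ℬ] [HasShift ℬ ℤ]
  [∀ n : ℤ, (shiftFunctor ℬ n).Additive] [Pretriangulated ℬ]

/-- In a distinguished triangle, if the first object is zero then the second morphism
is an isomorphism. -/
lemma RZaux.isIso₂_of_isZero₁ {T : Triangle 𝒜} (hT : T ∈ distTriang 𝒜)
    (h : IsZero T.obj₁) : IsIso T.mor₂ :=
  (Triangle.isZero₁_iff_isIso₂ T hT).1 h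

variable (F : 𝒜 ⥤ ℬ) [F.Additive] [F.CommShift ℤ] [F.IsTriangulated]

lemma RZaux.isZero_shift {X : 𝒜} (hX : IsZero (F.obj X)) (n : ℤ) :
    IsZero (F.obj (X⟦n⟧)) :=
  ((shiftFunctor ℬ n).map_isZero hX).of_iso ((F.commShiftIso n).app X)

lemma RZaux.kerW_iff {X Y : 𝒜} (f : X ⟶ Y) : kerW F f ↔ IsIso (F.map f) := by
  constructor
  · rintro ⟨Z, g, h, hT, hZ⟩
    exact (Triangle.isZero₃_iff_isIso₁ _ (F.map_distinguished _ hT)).1 hZ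
  · intro hf
    obtain ⟨Z, g, h, hT⟩ := distinguished_cocone_triangle f
    exact ⟨Z, g, h, hT,
      (Triangle.isZero₃_iff_isIso₁ _ (F.map_distinguished _ hT)).2 hf⟩

lemma RZaux.hasLeftCalc : (kerW F).HasLeftCalculusOfFractions := by
  have hmul : (kerW F).IsMultiplicative :=
    { id_mem := fun X => (RZaux.kerW_iff F _).2 (by rw [F.map_id]; infer_instance)
      comp_mem := fun f g hf hg => by
        rw [RZaux.kerW_iff] at hf hg ⊢
        rw [F.map_comp]
        exact IsIso.comp_isIso }
  refine { toIsMultiplicative := hmul, exists_leftFraction := ?_, ext := ?_ }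
  · intro X Y φ
    obtain ⟨Z, p, q, hT, hZ⟩ := φ.hs
    set T := Triangle.mk φ.s p q with hTdef
    have hA : T.invRotate ∈ distTriang 𝒜 := inv_rot_of_distTriang _ hT
    obtain ⟨N, d, e', hB⟩ := distinguished_cocone_triangle (T.invRotate.mor₁ ≫ φ.f)
    obtain ⟨c, hc, -⟩ := complete_distinguished_triangle_morphism T.invRotate
      (Triangle.mk (T.invRotate.mor₁ ≫ φ.f) d e') hA hB (𝟙 _) φ.f (by exact (Category.id_comp _).symm)
    have hd : kerW F d := by
      rw [RZaux.kerW_iff]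
      have : IsZero (F.obj (Z⟦(-1 : ℤ)⟧)) := RZaux.isZero_shift F hZ _
      exact RZaux.isIso₂_of_isZero₁
        (F.map_distinguished _ hB) this
    exact ⟨⟨c, d, hd⟩, by exact hc.symm⟩
  · rintro X' X Y f₁ f₂ s hs hsf
    obtain ⟨Z, p, q, hT, hZ⟩ := hs
    have hd : s ≫ (f₁ - f₂) = 0 := by rw [Preadditive.comp_sub, hsf, sub_self]
    obtain ⟨r, hr⟩ := Triangle.yoneda_exact₂ _ hT (f₁ - f₂) hd
    obtain ⟨Y', t, e', hT'⟩ := distinguished_cocone_triangle r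
    refine ⟨Y', t, ?_, ?_⟩
    · rw [RZaux.kerW_iff]
      exact RZaux.isIso₂_of_isZero₁ (F.map_distinguished _ hT') hZ
    · have h0 : r ≫ t = 0 := comp_distTriang_mor_zero₁₂ _ hT'
      have : (f₁ - f₂) ≫ t = 0 := by
        rw [hr]; exact (Category.assoc p r t).trans ((congrArg (fun x => p ≫ x) h0).trans Limits.comp_zero)
      rw [← sub_eq_zero, ← Preadditive.sub_comp]
      exact this

/-- Key lemma from (WSM): any morphism killed by `F` is annihilated by post-composition
with a morphism in `kerW F`. -/
lemma RZaux.wsm_factor (hwsm : CondWSM F) {X Y : 𝒜} (f : X ⟶ Y) (hf : F.map f = 0) :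
    ∃ (Z : 𝒜) (s : Y ⟶ Z), kerW F s ∧ f ≫ s = 0 := by
  obtain ⟨Z₀, g, h, hT⟩ := distinguished_cocone_triangle f
  have hFT := F.map_distinguished _ hT
  have hsm : IsSplitMono (F.map g) := by
    obtain ⟨retr, hretr⟩ := Triangle.yoneda_exact₂ _ hFT (𝟙 (F.obj Y))
      (by change F.map f ≫ 𝟙 (F.obj Y) = 0; rw [hf, Limits.zero_comp])
    exact ⟨⟨⟨retr, hretr.symm⟩⟩⟩
  obtain ⟨X'', u', hiso⟩ := hwsm g hsm
  refine ⟨X'', g ≫ u', (RZaux.kerW_iff F _).2 hiso, ?_⟩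
  have h0 : f ≫ g = 0 := comp_distTriang_mor_zero₁₂ _ hT
  rw [← Category.assoc, h0, Limits.zero_comp]

/-- A morphism annihilated by post-composition with a morphism in `kerW F` factors
through an object killed by `F`. -/
lemma RZaux.factor {X Y Z : 𝒜} (f : X ⟶ Y) (s : Y ⟶ Z) (hs : kerW F s)
    (hfs : f ≫ s = 0) :
    ∃ (K : 𝒜) (g : X ⟶ K) (h : K ⟶ Y), IsZero (F.obj K) ∧ g ≫ h = f := by
  obtain ⟨Zc, g, h, hT, hZ⟩ := hs
  set T := Triangle.mk s g h with hTdef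
  obtain ⟨e, he⟩ := Triangle.coyoneda_exact₂ T.invRotate (inv_rot_of_distTriang _ hT) f hfs
  exact ⟨_, e, T.invRotate.mor₁, RZaux.isZero_shift F hZ _, he.symm⟩

end Helpers

/-- Theorem [RZ2, 1.1]. Let `F : 𝒜 → ℬ` be a triangle functor,
`V : 𝒜 → 𝒜/Ker F` the Verdier quotient functor (i.e. a localization of `𝒜` at the class
of morphisms whose cone is killed by `F`), and `F̃` the induced functor with
`F = F̃ ∘ V`.  Then the following are equivalent: (1) `F` is objective; (2) `F`
satisfies (WSM); (3) `F̃` is faithful. -/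
theorem stmt11
    {𝒜 : Type u} [Category.{v} 𝒜] [HasZeroObject 𝒜] [Preadditive 𝒜] [HasShift 𝒜 ℤ]
    [∀ n : ℤ, (CategoryTheory.shiftFunctor 𝒜 n).Additive] [Pretriangulated 𝒜]
    {ℬ : Type u'} [Category.{v'} ℬ] [HasZeroObject ℬ] [Preadditive ℬ] [HasShift ℬ ℤ]
    [∀ n : ℤ, (CategoryTheory.shiftFunctor ℬ n).Additive] [Pretriangulated ℬ]
    (F : 𝒜 ⥤ ℬ) [F.Additive] [F.CommShift ℤ] [F.IsTriangulated]
    {𝒟 : Type u''} [Category.{v''} 𝒟]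
    (V : 𝒜 ⥤ 𝒟) [V.IsLocalization (kerW F)]
    (Ftilde : 𝒟 ⥤ ℬ) (hFtilde : V ⋙ Ftilde = F) :
    List.TFAE [ObjectiveFunctor F, CondWSM F, Ftilde.Faithful] := by
  haveI := RZaux.hasLeftCalc F
  haveI := Localization.essSurj V (kerW F)
  let e : V ⋙ Ftilde ≅ F := eqToIso hFtilde
  have hFt : ∀ {P Q : 𝒜} (g : P ⟶ Q),
      Ftilde.map (V.map g) = e.hom.app P ≫ F.map g ≫ e.inv.app Q := by
    intro P Q g
    have h := e.hom.naturality g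
    dsimp at h
    rw [← Category.assoc, ← h]
    simp
  tfae_have 1 → 2 := by
    intro h1 X Y u hu
    obtain ⟨Z, v, w, hT⟩ := distinguished_cocone_triangle u
    have hFT := F.map_distinguished _ hT
    haveI : IsSplitMono (F.map u) := hu
    have hm3 : (F.mapTriangle.obj (Triangle.mk u v w)).mor₃ = 0 := by
      have h31 := comp_distTriang_mor_zero₃₁ _ hFT
      have : Mono ((F.mapTriangle.obj (Triangle.mk u v w)).mor₁⟦(1 : ℤ)⟧') := by
        change Mono ((F.map u)⟦(1 : ℤ)⟧')
        infer_instance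
      exact zero_of_comp_mono _ h31
    have hw0 : F.map w = 0 := by
      change F.map w ≫ (F.commShiftIso (1 : ℤ)).hom.app X = 0 at hm3
      rw [Preadditive.IsIso.comp_right_eq_zero] at hm3
      exact hm3
    obtain ⟨K, g', h', hK, hgh⟩ := h1 w hw0
    obtain ⟨X', t, p, hT₂⟩ := distinguished_cocone_triangle₂ h'
    have hFt2 : IsIso (F.map t) :=
      (Triangle.isZero₃_iff_isIso₁ _ (F.map_distinguished _ hT₂)).1 hK
    have hrot : (Triangle.mk u v w).rotate.rotate ∈ distTriang 𝒜 :=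
      rot_of_distTriang _ (rot_of_distTriang _ hT)
    have hwt : ((Triangle.mk u v w).rotate.rotate).mor₁ ≫ t⟦(1 : ℤ)⟧' = 0 := by
      have hz := comp_distTriang_mor_zero₃₁ _ hT₂
      change h' ≫ t⟦(1 : ℤ)⟧' = 0 at hz
      change w ≫ t⟦(1 : ℤ)⟧' = 0
      rw [← hgh, Category.assoc, hz, Limits.comp_zero]
    obtain ⟨g₁, hg₁⟩ := Triangle.yoneda_exact₂ _ hrot (t⟦(1 : ℤ)⟧') hwt
    obtain ⟨u'', hu''⟩ := (shiftFunctor 𝒜 (1 : ℤ)).map_surjective g₁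
    refine ⟨X', (-u''), ?_⟩
    have huu : u ≫ (-u'') = t := by
      apply (shiftFunctor 𝒜 (1 : ℤ)).map_injective
      change t⟦(1 : ℤ)⟧' = (-u⟦(1 : ℤ)⟧') ≫ g₁ at hg₁
      exact ((shiftFunctor 𝒜 (1 : ℤ)).map_comp u (-u'')).trans
        ((congrArg (fun x => (shiftFunctor 𝒜 (1 : ℤ)).map u ≫ x)
          (((shiftFunctor 𝒜 (1 : ℤ)).map_neg (f := u'')).trans (congrArg Neg.neg hu''))).trans
          (by rw [hg₁]; exact (Preadditive.comp_neg _ _).trans (Preadditive.neg_comp _ _).symm))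
    rw [huu]
    exact hFt2
  tfae_have 2 → 3 := by
    intro h2
    refine ⟨fun {D₁ D₂} φ ψ hφψ => ?_⟩
    let X := V.objPreimage D₁
    let Y := V.objPreimage D₂
    let e₁ : V.obj X ≅ D₁ := V.objObjPreimageIso D₁
    let e₂ : V.obj Y ≅ D₂ := V.objObjPreimageIso D₂
    suffices hsuff : e₁.hom ≫ φ ≫ e₂.inv = e₁.hom ≫ ψ ≫ e₂.inv by
      rw [cancel_epi e₁.hom, cancel_mono e₂.inv] at hsuff
      exact hsuff
    obtain ⟨α, hα⟩ := Localization.exists_leftFraction V (kerW F) (e₁.hom ≫ φ ≫ e₂.inv)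
    obtain ⟨β, hβ⟩ := Localization.exists_leftFraction V (kerW F)
      ((e₁.hom ≫ ψ ≫ e₂.inv) ≫ V.map α.s)
    have h1 : (e₁.hom ≫ φ ≫ e₂.inv) ≫ V.map α.s = V.map α.f := by
      rw [hα]; exact MorphismProperty.LeftFraction.map_comp_map_s _ _ _
    have h2' : ((e₁.hom ≫ ψ ≫ e₂.inv) ≫ V.map α.s) ≫ V.map β.s = V.map β.f := by
      rw [hβ]; exact MorphismProperty.LeftFraction.map_comp_map_s _ _ _
    have hhl : Ftilde.map (V.map (α.f ≫ β.s)) = Ftilde.map (V.map β.f) := by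
      rw [V.map_comp, ← h1, ← h2']
      simp only [Functor.map_comp, Category.assoc, hφψ]
    have hF : F.map (α.f ≫ β.s) = F.map β.f := by
      rw [hFt, hFt] at hhl
      rwa [cancel_epi (e.hom.app X), cancel_mono (e.inv.app β.Y')] at hhl
    have hsub : F.map (α.f ≫ β.s - β.f) = 0 := by rw [F.map_sub, hF, sub_self]
    obtain ⟨R, r, hr, hzero⟩ := RZaux.wsm_factor F h2 _ hsub
    have hrr : (α.f ≫ β.s) ≫ r = β.f ≫ r := by
      rw [← sub_eq_zero, ← Preadditive.sub_comp]
      exact hzero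
    haveI hiso_r : IsIso (V.map r) := Localization.inverts V (kerW F) r hr
    have hV : V.map (α.f ≫ β.s) = V.map β.f := by
      rw [← cancel_mono (V.map r), ← V.map_comp, ← V.map_comp, hrr]
    haveI hiso_s : IsIso (V.map α.s) := Localization.inverts V (kerW F) _ α.hs
    haveI hiso_t : IsIso (V.map β.s) := Localization.inverts V (kerW F) _ β.hs
    have h2n := h2'
    simp only [Category.assoc] at h2n
    have hfin : e₁.hom ≫ φ ≫ e₂.inv ≫ V.map α.s ≫ V.map β.s
        = e₁.hom ≫ ψ ≫ e₂.inv ≫ V.map α.s ≫ V.map β.s := by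
      rw [reassoc_of% h1, h2n, ← hV, V.map_comp]
    rw [← cancel_mono (V.map α.s), ← cancel_mono (V.map β.s)]
    simpa only [Category.assoc] using hfin
  tfae_have 3 → 1 := by
    intro h3
    haveI := h3
    intro X Y f hf
    have hmap : V.map f = V.map (0 : X ⟶ Y) := Ftilde.map_injective (by
      rw [hFt, hFt, hf, F.map_zero])
    obtain ⟨Z, s, hs, hfs⟩ := (MorphismProperty.map_eq_iff_postcomp V (kerW F) f 0).1 hmap
    rw [Limits.zero_comp] at hfs
    exact RZaux.factor F f s hs hfs
  tfae_finish
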